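/- Let n ≥ 1 and let H(z,x) be a convergent power series in (z,x) ∈ ℂ^n × ℂ with H(0,0) ≠ 0. Let d ≥ 1 and let P(T) = Σ_{j=1}^d a_j(z,x) T^j be a polynomial in one variable T whose coefficients are formal power series a_j = Σ_{k≥1} a_{j,k}(z) x^k in x with no term independent of x, and such that each a_{j,k}(z) is a convergent power series in z. Let χ(z,x) = Σ_{k≥0} χ_k(z) x^k with each χ_k a convergent power series in z. Suppose F(z,x) = Σ_{k≥0} F_k(z) x^k, where each F_k is a formal power series in z, satisfies the identity F·H² + P(F) = χ in the ring of formal power series ℂ[[z,x]]. Then every coefficient series F_k(z) is a convergent power series. -/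

import Mathlib

/-!
STATEMENT 5.
Formal power series in `(z,x) ∈ ℂ^n × ℂ` are identified with power series in `x` whose
coefficients are formal power series in `z`, i.e. with elements of
`PowerSeries (MvPowerSeries (Fin n) ℂ)`.  A multivariate power series is *convergent* if
its coefficients admit a geometric bound `‖c_m‖ ≤ C r^{|m|}` (positive radius of
convergence), and similarly for joint convergence in `(z,x)`.

Suppose `H(z,x)` is convergent with `H(0,0) ≠ 0`, `P(T) = Σ_{j=1}^d a_j(z,x) T^j` has
coefficients `a_j` with no term independent of `x` and with convergent `x`-coefficients,
`χ(z,x)` has convergent `x`-coefficients, and the formal power series `F` satisfies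
`F·H² + P(F) = χ` in `ℂ[[z,x]]`.  Then every `x`-coefficient `F_k(z)` of `F` is convergent.
-/

open Complex

/-- total degree of a multi-index -/
def totalDeg {σ : Type*} (m : σ →₀ ℕ) : ℕ := m.sum fun _ e => e

/-- A multivariate formal power series is convergent (has positive radius of convergence)
iff its coefficients satisfy a bound `‖c_m‖ ≤ C · r^{|m|}`. -/
def PSConv {σ : Type*} (F : MvPowerSeries σ ℂ) : Prop :=
  ∃ C r : ℝ, 0 < r ∧ ∀ m : σ →₀ ℕ, ‖MvPowerSeries.coeff m F‖ ≤ C * r ^ totalDeg m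

/-- A formal power series in `(z,x)`, written as an element of
`PowerSeries (MvPowerSeries (Fin n) ℂ)`, is (jointly) convergent iff its coefficients
satisfy a bound `‖c_{k,m}‖ ≤ C · r^{k+|m|}`. -/
def PS2Conv {n : ℕ} (H : PowerSeries (MvPowerSeries (Fin n) ℂ)) : Prop :=
  ∃ C r : ℝ, 0 < r ∧ ∀ (k : ℕ) (m : Fin n →₀ ℕ),
    ‖MvPowerSeries.coeff m (PowerSeries.coeff k H)‖ ≤
      C * r ^ (k + totalDeg m)

section Aux

variable {σ : Type*} [Fintype σ] [DecidableEq σ]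

lemma totalDeg_zero' {σ' : Type*} : totalDeg (0 : σ' →₀ ℕ) = 0 := by
  simp [totalDeg]

lemma totalDeg_eq (m : σ →₀ ℕ) : totalDeg m = ∑ i, m i :=
  Finsupp.sum_fintype _ _ fun _ => rfl

lemma totalDeg_eq_zero_iff {m : σ →₀ ℕ} : totalDeg m = 0 ↔ m = 0 := by
  constructor
  · intro h
    ext i
    rw [totalDeg_eq] at h
    simpa using Finset.sum_eq_zero_iff.mp h i (Finset.mem_univ i)
  · rintro rfl
    exact totalDeg_zero'

lemma totalDeg_add (a b : σ →₀ ℕ) : totalDeg (a + b) = totalDeg a + totalDeg b := by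
  simp [totalDeg_eq, Finsupp.add_apply, Finset.sum_add_distrib]

lemma antidiag_fst_le {m : σ →₀ ℕ} {p : (σ →₀ ℕ) × (σ →₀ ℕ)}
    (hp : p ∈ Finset.HasAntidiagonal.antidiagonal m) (i : σ) : p.1 i ≤ m i := by
  rw [Finset.HasAntidiagonal.mem_antidiagonal] at hp
  rw [← hp, Finsupp.add_apply]
  exact Nat.le_add_right _ _

lemma antidiag_inj {m : σ →₀ ℕ} :
    Set.InjOn (fun p : (σ →₀ ℕ) × (σ →₀ ℕ) => ⇑p.1) (Finset.HasAntidiagonal.antidiagonal m) := by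
  intro p hp q hq h
  have h1 : p.1 = q.1 := DFunLike.coe_injective h
  rw [Finset.mem_coe, Finset.HasAntidiagonal.mem_antidiagonal] at hp hq
  have h2 : p.2 = q.2 := by
    have h3 := hp.trans hq.symm
    rwa [h1, add_right_inj] at h3
  exact Prod.ext h1 h2

lemma antidiag_maps {m : σ →₀ ℕ} {p : (σ →₀ ℕ) × (σ →₀ ℕ)}
    (hp : p ∈ Finset.HasAntidiagonal.antidiagonal m) :
    ⇑p.1 ∈ Fintype.piFinset fun i => Finset.range (m i + 1) := by
  rw [Fintype.mem_piFinset]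
  intro i
  rw [Finset.mem_range, Nat.lt_succ_iff]
  exact antidiag_fst_le hp i

lemma sum_antidiag_pow_le (m : σ →₀ ℕ) {t : ℝ} (h0 : 0 ≤ t) (h1 : t < 1) :
    ∑ p ∈ Finset.HasAntidiagonal.antidiagonal m, t ^ totalDeg p.1 ≤ (1 - t)⁻¹ ^ Fintype.card σ := by
  have hstep : ∑ p ∈ Finset.HasAntidiagonal.antidiagonal m, t ^ totalDeg p.1
      = ∑ f ∈ (Finset.HasAntidiagonal.antidiagonal m).image (fun p : (σ →₀ ℕ) × (σ →₀ ℕ) => ⇑p.1), ∏ i, t ^ f i := by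
    rw [Finset.sum_image (fun p hp q hq h => antidiag_inj hp hq h)]
    refine Finset.sum_congr rfl fun p _ => ?_
    rw [totalDeg_eq, ← Finset.prod_pow_eq_pow_sum]
  rw [hstep]
  have h2 : ∑ f ∈ (Finset.HasAntidiagonal.antidiagonal m).image (fun p : (σ →₀ ℕ) × (σ →₀ ℕ) => ⇑p.1), ∏ i, t ^ f i
      ≤ ∑ f ∈ Fintype.piFinset (fun i => Finset.range (m i + 1)), ∏ i, t ^ f i := by
    apply Finset.sum_le_sum_of_subset_of_nonneg
    · intro f hf
      obtain ⟨p, hp, rfl⟩ := Finset.mem_image.mp hf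
      exact antidiag_maps hp
    · intro f _ _
      exact Finset.prod_nonneg fun i _ => pow_nonneg h0 _
  refine h2.trans ?_
  rw [← Finset.prod_univ_sum]
  have h3 : ∀ i : σ, ∑ j ∈ Finset.range (m i + 1), t ^ j ≤ (1 - t)⁻¹ := by
    intro i
    have h4 := Summable.sum_le_tsum (Finset.range (m i + 1)) (fun j _ => pow_nonneg h0 j)
      (summable_geometric_of_lt_one h0 h1)
    rwa [tsum_geometric_of_lt_one h0 h1] at h4
  calc ∏ i, ∑ j ∈ Finset.range (m i + 1), t ^ j
      ≤ ∏ _i : σ, (1 - t)⁻¹ :=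
        Finset.prod_le_prod (fun i _ => Finset.sum_nonneg fun j _ => pow_nonneg h0 j)
          (fun i _ => h3 i)
    _ = (1 - t)⁻¹ ^ Fintype.card σ := by rw [Finset.prod_const, Finset.card_univ]

lemma card_antidiag_le (m : σ →₀ ℕ) :
    ((Finset.HasAntidiagonal.antidiagonal m).card : ℝ) ≤ 2 ^ totalDeg m := by
  have h1 : (Finset.HasAntidiagonal.antidiagonal m).card
      ≤ (Fintype.piFinset fun i => Finset.range (m i + 1)).card :=
    Finset.card_le_card_of_injOn _ (fun p hp => antidiag_maps hp) antidiag_inj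
  have h2 : (Fintype.piFinset fun i : σ => Finset.range (m i + 1)).card = ∏ i, (m i + 1) := by
    simp [Fintype.card_piFinset]
  have h3 : ∏ i, (m i + 1) ≤ 2 ^ totalDeg m := by
    rw [totalDeg_eq, ← Finset.prod_pow_eq_pow_sum]
    exact Finset.prod_le_prod' fun i _ => Nat.succ_le_of_lt Nat.lt_two_pow_self
  have h4 : (Finset.HasAntidiagonal.antidiagonal m).card ≤ 2 ^ totalDeg m := (h1.trans_eq h2).trans h3
  exact_mod_cast h4

lemma PSConv.elim' {F : MvPowerSeries σ ℂ} (h : PSConv F) :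
    ∃ C r : ℝ, 0 ≤ C ∧ 0 < r ∧
      ∀ m : σ →₀ ℕ, ‖MvPowerSeries.coeff m F‖ ≤ C * r ^ totalDeg m := by
  obtain ⟨C, r, hr, hb⟩ := h
  have h0 := hb 0
  rw [totalDeg_zero', pow_zero, mul_one] at h0
  exact ⟨C, r, le_trans (norm_nonneg _) h0, hr, hb⟩

lemma PSConv.zero : PSConv (0 : MvPowerSeries σ ℂ) :=
  ⟨0, 1, one_pos, fun m => by simp⟩

lemma PSConv.one : PSConv (1 : MvPowerSeries σ ℂ) :=
  ⟨1, 1, one_pos, fun m => by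
    rw [MvPowerSeries.coeff_one]
    split_ifs <;> simp⟩

lemma PSConv.neg {F : MvPowerSeries σ ℂ} (h : PSConv F) : PSConv (-F) := by
  obtain ⟨C, r, hr, hb⟩ := h
  exact ⟨C, r, hr, fun m => by rw [map_neg, norm_neg]; exact hb m⟩

lemma PSConv.add {F G : MvPowerSeries σ ℂ} (hF : PSConv F) (hG : PSConv G) :
    PSConv (F + G) := by
  obtain ⟨C1, r1, hC1, hr1, h1⟩ := hF.elim'
  obtain ⟨C2, r2, hC2, hr2, h2⟩ := hG.elim'
  refine ⟨C1 + C2, max r1 r2, lt_max_of_lt_left hr1, fun m => ?_⟩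
  rw [map_add]
  have e1 : C1 * r1 ^ totalDeg m ≤ C1 * (max r1 r2) ^ totalDeg m :=
    mul_le_mul_of_nonneg_left (pow_le_pow_left₀ hr1.le (le_max_left _ _) _) hC1
  have e2 : C2 * r2 ^ totalDeg m ≤ C2 * (max r1 r2) ^ totalDeg m :=
    mul_le_mul_of_nonneg_left (pow_le_pow_left₀ hr2.le (le_max_right _ _) _) hC2
  calc ‖MvPowerSeries.coeff m F + MvPowerSeries.coeff m G‖
      ≤ ‖MvPowerSeries.coeff m F‖ + ‖MvPowerSeries.coeff m G‖ := norm_add_le _ _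
    _ ≤ C1 * r1 ^ totalDeg m + C2 * r2 ^ totalDeg m := add_le_add (h1 m) (h2 m)
    _ ≤ (C1 + C2) * (max r1 r2) ^ totalDeg m := by rw [add_mul]; exact add_le_add e1 e2

lemma PSConv.sub {F G : MvPowerSeries σ ℂ} (hF : PSConv F) (hG : PSConv G) :
    PSConv (F - G) := by
  rw [sub_eq_add_neg]
  exact hF.add hG.neg

lemma PSConv.mul {F G : MvPowerSeries σ ℂ} (hF : PSConv F) (hG : PSConv G) :
    PSConv (F * G) := by
  obtain ⟨C1, r1, hC1, hr1, h1⟩ := hF.elim'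
  obtain ⟨C2, r2, hC2, hr2, h2⟩ := hG.elim'
  have hR0 : (0:ℝ) < max r1 r2 := lt_max_of_lt_left hr1
  refine ⟨C1 * C2, 2 * max r1 r2, by positivity, fun m => ?_⟩
  rw [MvPowerSeries.coeff_mul]
  have hterm : ∀ p ∈ Finset.HasAntidiagonal.antidiagonal m,
      ‖MvPowerSeries.coeff p.1 F * MvPowerSeries.coeff p.2 G‖
        ≤ C1 * C2 * (max r1 r2) ^ totalDeg m := by
    intro p hp
    rw [norm_mul]
    have hd : totalDeg p.1 + totalDeg p.2 = totalDeg m := by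
      rw [← totalDeg_add, Finset.HasAntidiagonal.mem_antidiagonal.mp hp]
    calc ‖MvPowerSeries.coeff p.1 F‖ * ‖MvPowerSeries.coeff p.2 G‖
        ≤ (C1 * r1 ^ totalDeg p.1) * (C2 * r2 ^ totalDeg p.2) :=
          mul_le_mul (h1 p.1) (h2 p.2) (norm_nonneg _) (by positivity)
      _ ≤ (C1 * (max r1 r2) ^ totalDeg p.1) * (C2 * (max r1 r2) ^ totalDeg p.2) := by
          have e1 : r1 ^ totalDeg p.1 ≤ (max r1 r2) ^ totalDeg p.1 :=
            pow_le_pow_left₀ hr1.le (le_max_left _ _) _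
          have e2 : r2 ^ totalDeg p.2 ≤ (max r1 r2) ^ totalDeg p.2 :=
            pow_le_pow_left₀ hr2.le (le_max_right _ _) _
          have := mul_le_mul (mul_le_mul_of_nonneg_left e1 hC1)
            (mul_le_mul_of_nonneg_left e2 hC2) (by positivity) (by positivity)
          exact this
      _ = C1 * C2 * (max r1 r2) ^ totalDeg m := by rw [← hd, pow_add]; ring
  calc ‖∑ p ∈ Finset.HasAntidiagonal.antidiagonal m,
        MvPowerSeries.coeff p.1 F * MvPowerSeries.coeff p.2 G‖
      ≤ ∑ p ∈ Finset.HasAntidiagonal.antidiagonal m,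
          ‖MvPowerSeries.coeff p.1 F * MvPowerSeries.coeff p.2 G‖ := norm_sum_le _ _
    _ ≤ (Finset.HasAntidiagonal.antidiagonal m).card • (C1 * C2 * (max r1 r2) ^ totalDeg m) :=
        Finset.sum_le_card_nsmul _ _ _ hterm
    _ = ((Finset.HasAntidiagonal.antidiagonal m).card : ℝ) * (C1 * C2 * (max r1 r2) ^ totalDeg m) := by
        rw [nsmul_eq_mul]
    _ ≤ (2:ℝ) ^ totalDeg m * (C1 * C2 * (max r1 r2) ^ totalDeg m) :=
        mul_le_mul_of_nonneg_right (card_antidiag_le m) (by positivity)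
    _ = C1 * C2 * (2 * max r1 r2) ^ totalDeg m := by rw [mul_pow]; ring

lemma PSConv.sum {ι : Type*} (s : Finset ι) (f : ι → MvPowerSeries σ ℂ)
    (h : ∀ i ∈ s, PSConv (f i)) : PSConv (∑ i ∈ s, f i) :=
  Finset.sum_induction f PSConv (fun _ _ ha hb => ha.add hb) PSConv.zero h

lemma PSConv.inv {G : MvPowerSeries σ ℂ} (h : PSConv G)
    (h0 : MvPowerSeries.constantCoeff G ≠ 0) : PSConv G⁻¹ := by
  obtain ⟨C, r, hC0, hr, hb⟩ := h.elim'
  set g : ℝ := ‖MvPowerSeries.constantCoeff G‖ with hgdef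
  have hg : 0 < g := norm_pos_iff.mpr h0
  have hCg : g ≤ C := by
    have h1 := hb 0
    rw [totalDeg_zero', pow_zero, mul_one,
      MvPowerSeries.coeff_zero_eq_constantCoeff_apply] at h1
    exact h1
  have hC : 0 < C := lt_of_lt_of_le hg hCg
  set N := Fintype.card σ with hN
  set t : ℝ := min (1/2) (g / (C * 2 ^ N)) with htdef
  have ht0 : 0 < t := lt_min (by norm_num) (by positivity)
  have thalf : t ≤ 1/2 := min_le_left _ _
  have ht1 : t < 1 := lt_of_le_of_lt thalf (by norm_num)
  have htg : C * t * (1 - t)⁻¹ ^ N ≤ g := by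
    have h1t : (0:ℝ) < 1 - t := by linarith
    have h1 : (1 - t)⁻¹ ≤ 2 := by
      rw [inv_le_comm₀ h1t (by norm_num)]
      linarith
    have h2 : (1 - t)⁻¹ ^ N ≤ 2 ^ N := pow_le_pow_left₀ (by positivity) h1 N
    have h3 : t ≤ g / (C * 2 ^ N) := min_le_right _ _
    calc C * t * (1 - t)⁻¹ ^ N ≤ C * t * 2 ^ N := by
          exact mul_le_mul_of_nonneg_left h2 (by positivity)
      _ ≤ C * (g / (C * 2 ^ N)) * 2 ^ N :=
          mul_le_mul_of_nonneg_right (mul_le_mul_of_nonneg_left h3 hC.le) (by positivity)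
      _ = g := by field_simp
  set B : ℝ := r / t ^ 2 with hBdef
  have hB : 0 < B := by positivity
  have hrtB : r = t ^ 2 * B := by rw [hBdef]; field_simp
  have key : ∀ (D : ℕ) (m : σ →₀ ℕ), totalDeg m ≤ D →
      ‖MvPowerSeries.coeff m G⁻¹‖ ≤ g⁻¹ * B ^ totalDeg m := by
    intro D
    induction D with
    | zero =>
      intro m hm
      have hm0 : m = 0 := totalDeg_eq_zero_iff.mp (Nat.le_zero.mp hm)
      subst hm0
      rw [MvPowerSeries.coeff_inv, if_pos rfl, totalDeg_zero', pow_zero, mul_one, norm_inv]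
    | succ D ihD =>
      intro m hm
      by_cases hmD : totalDeg m ≤ D
      · exact ihD m hmD
      have hm0 : m ≠ 0 := fun hc => hmD (by rw [hc, totalDeg_zero']; exact Nat.zero_le _)
      rw [MvPowerSeries.coeff_inv, if_neg hm0, norm_mul, norm_neg, norm_inv, ← hgdef]
      have hsum : ‖∑ x ∈ Finset.HasAntidiagonal.antidiagonal m,
          if x.2 < m then MvPowerSeries.coeff x.1 G * MvPowerSeries.coeff x.2 G⁻¹
          else 0‖ ≤ (C * g⁻¹ * t * B ^ totalDeg m) * (1 - t)⁻¹ ^ N := by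
        calc ‖∑ x ∈ Finset.HasAntidiagonal.antidiagonal m,
              if x.2 < m then MvPowerSeries.coeff x.1 G * MvPowerSeries.coeff x.2 G⁻¹
              else 0‖
            ≤ ∑ x ∈ Finset.HasAntidiagonal.antidiagonal m,
              ‖if x.2 < m then MvPowerSeries.coeff x.1 G * MvPowerSeries.coeff x.2 G⁻¹
               else 0‖ := norm_sum_le _ _
          _ ≤ ∑ x ∈ Finset.HasAntidiagonal.antidiagonal m,
              (C * g⁻¹ * t * B ^ totalDeg m) * t ^ totalDeg x.1 := by
              apply Finset.sum_le_sum
              intro x hx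
              split_ifs with hx2
              · have hxadd : x.1 + x.2 = m := Finset.HasAntidiagonal.mem_antidiagonal.mp hx
                have hx1ne : x.1 ≠ 0 := by
                  intro hx1
                  rw [hx1, zero_add] at hxadd
                  rw [hxadd] at hx2
                  exact lt_irrefl _ hx2
                have hd1 : 1 ≤ totalDeg x.1 :=
                  Nat.one_le_iff_ne_zero.mpr fun hc => hx1ne (totalDeg_eq_zero_iff.mp hc)
                have hdeq : totalDeg x.1 + totalDeg x.2 = totalDeg m := by
                  rw [← totalDeg_add, hxadd]
                have hx2D : totalDeg x.2 ≤ D := by omega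
                have ihx := ihD x.2 hx2D
                rw [norm_mul]
                have hstep1 : ‖MvPowerSeries.coeff x.1 G‖ * ‖MvPowerSeries.coeff x.2 G⁻¹‖
                    ≤ (C * r ^ totalDeg x.1) * (g⁻¹ * B ^ totalDeg x.2) :=
                  mul_le_mul (hb x.1) ihx (norm_nonneg _) (by positivity)
                have hstep2 : (C * r ^ totalDeg x.1) * (g⁻¹ * B ^ totalDeg x.2)
                    = C * g⁻¹ * B ^ totalDeg m * t ^ (2 * totalDeg x.1) := by
                  rw [hrtB, mul_pow, ← hdeq, pow_add, ← pow_mul]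
                  ring
                have hstep3 : t ^ (2 * totalDeg x.1) ≤ t ^ (totalDeg x.1 + 1) :=
                  pow_le_pow_of_le_one ht0.le ht1.le (by omega)
                calc ‖MvPowerSeries.coeff x.1 G‖ * ‖MvPowerSeries.coeff x.2 G⁻¹‖
                    ≤ C * g⁻¹ * B ^ totalDeg m * t ^ (2 * totalDeg x.1) := by
                      rw [← hstep2]; exact hstep1
                  _ ≤ C * g⁻¹ * B ^ totalDeg m * t ^ (totalDeg x.1 + 1) :=
                      mul_le_mul_of_nonneg_left hstep3 (by positivity)
                  _ = (C * g⁻¹ * t * B ^ totalDeg m) * t ^ totalDeg x.1 := by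
                      rw [pow_succ]; ring
              · rw [norm_zero]
                positivity
          _ = (C * g⁻¹ * t * B ^ totalDeg m) *
              ∑ x ∈ Finset.HasAntidiagonal.antidiagonal m, t ^ totalDeg x.1 := by
              rw [Finset.mul_sum]
          _ ≤ (C * g⁻¹ * t * B ^ totalDeg m) * (1 - t)⁻¹ ^ N :=
              mul_le_mul_of_nonneg_left (sum_antidiag_pow_le m ht0.le ht1) (by positivity)
      have hfinal : g⁻¹ * ((C * g⁻¹ * t * B ^ totalDeg m) * (1 - t)⁻¹ ^ N)
          ≤ g⁻¹ * B ^ totalDeg m := by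
        have h5 : C * t * (1 - t)⁻¹ ^ N * g⁻¹ ≤ 1 := by
          have := mul_le_mul_of_nonneg_right htg (inv_pos.mpr hg).le
          rwa [mul_inv_cancel₀ hg.ne'] at this
        have h6 : (0:ℝ) ≤ g⁻¹ * B ^ totalDeg m := by positivity
        calc g⁻¹ * ((C * g⁻¹ * t * B ^ totalDeg m) * (1 - t)⁻¹ ^ N)
            = (C * t * (1 - t)⁻¹ ^ N * g⁻¹) * (g⁻¹ * B ^ totalDeg m) := by ring
          _ ≤ 1 * (g⁻¹ * B ^ totalDeg m) := mul_le_mul_of_nonneg_right h5 h6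
          _ = g⁻¹ * B ^ totalDeg m := one_mul _
      calc g⁻¹ * ‖∑ x ∈ Finset.HasAntidiagonal.antidiagonal m,
            if x.2 < m then MvPowerSeries.coeff x.1 G * MvPowerSeries.coeff x.2 G⁻¹
            else 0‖
          ≤ g⁻¹ * ((C * g⁻¹ * t * B ^ totalDeg m) * (1 - t)⁻¹ ^ N) :=
            mul_le_mul_of_nonneg_left hsum (inv_pos.mpr hg).le
        _ ≤ g⁻¹ * B ^ totalDeg m := hfinal
  exact ⟨g⁻¹, B, hB, fun m => key (totalDeg m) m le_rfl⟩

lemma psconv_coeff_mul {φ ψ : PowerSeries (MvPowerSeries σ ℂ)} {l : ℕ}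
    (hφ : ∀ i ≤ l, PSConv (PowerSeries.coeff i φ))
    (hψ : ∀ i ≤ l, PSConv (PowerSeries.coeff i ψ)) :
    PSConv (PowerSeries.coeff l (φ * ψ)) := by
  rw [PowerSeries.coeff_mul]
  apply PSConv.sum
  intro p hp
  rw [Finset.HasAntidiagonal.mem_antidiagonal] at hp
  exact (hφ p.1 (by omega)).mul (hψ p.2 (by omega))

lemma psconv_coeff_pow {φ : PowerSeries (MvPowerSeries σ ℂ)} {j l : ℕ}
    (hφ : ∀ i ≤ l, PSConv (PowerSeries.coeff i φ)) :
    PSConv (PowerSeries.coeff l (φ ^ j)) := by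
  induction j generalizing l with
  | zero =>
    rw [pow_zero, PowerSeries.coeff_one]
    split_ifs
    · exact PSConv.one
    · exact PSConv.zero
  | succ j ih =>
    rw [pow_succ]
    exact psconv_coeff_mul (fun i hi => ih (fun i' hi' => hφ i' (hi'.trans hi))) hφ

end Aux

theorem statement5 (n : ℕ) (hn : 1 ≤ n)
    (H : PowerSeries (MvPowerSeries (Fin n) ℂ))
    (hHconv : PS2Conv H)
    (hH0 : MvPowerSeries.constantCoeff
        (PowerSeries.coeff 0 H) ≠ 0)
    (d : ℕ) (hd : 1 ≤ d)
    (a : ℕ → PowerSeries (MvPowerSeries (Fin n) ℂ))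
    -- each `a_j` has no term independent of `x`
    (ha0 : ∀ j ∈ Finset.Icc 1 d, PowerSeries.coeff 0 (a j) = 0)
    -- each `x`-coefficient `a_{j,k}(z)` is convergent
    (haconv : ∀ j ∈ Finset.Icc 1 d, ∀ k : ℕ,
      PSConv (PowerSeries.coeff k (a j)))
    (χ : PowerSeries (MvPowerSeries (Fin n) ℂ))
    (hχconv : ∀ k : ℕ, PSConv (PowerSeries.coeff k χ))
    (F : PowerSeries (MvPowerSeries (Fin n) ℂ))
    -- the identity `F·H² + P(F) = χ` in `ℂ[[z,x]]`, with `P(T) = Σ_{j=1}^d a_j T^j`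
    (hFeq : F * H ^ 2 + ∑ j ∈ Finset.Icc 1 d, a j * F ^ j = χ) :
    ∀ k : ℕ, PSConv (PowerSeries.coeff k F) := by
  classical
  obtain ⟨CH, rH, hrH, hbH⟩ := hHconv
  have hHS : ∀ l : ℕ, PSConv (PowerSeries.coeff l H) := by
    intro l
    refine ⟨CH * rH ^ l, rH, hrH, fun m => ?_⟩
    calc ‖MvPowerSeries.coeff m (PowerSeries.coeff l H)‖
        ≤ CH * rH ^ (l + totalDeg m) := hbH l m
      _ = CH * rH ^ l * rH ^ totalDeg m := by rw [pow_add, mul_assoc]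
  have hH2 : ∀ l : ℕ, PSConv (PowerSeries.coeff l (H ^ 2)) :=
    fun l => psconv_coeff_pow (fun i _ => hHS i)
  have hc2ne : MvPowerSeries.constantCoeff
      (PowerSeries.coeff 0 (H ^ 2)) ≠ 0 := by
    have hc2 : PowerSeries.coeff 0 (H ^ 2)
        = (PowerSeries.coeff 0 H) ^ 2 := by
      rw [PowerSeries.coeff_zero_eq_constantCoeff_apply, map_pow,
        ← PowerSeries.coeff_zero_eq_constantCoeff_apply]
    rw [hc2, map_pow]
    exact pow_ne_zero _ hH0
  have hc2inv : PSConv (PowerSeries.coeff 0 (H ^ 2))⁻¹ :=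
    (hH2 0).inv hc2ne
  intro k
  induction k using Nat.strong_induction_on with
  | _ k ih =>
    have heq := congrArg (PowerSeries.coeff k) hFeq
    rw [map_add, map_sum, PowerSeries.coeff_mul] at heq
    have hmem : ((k, 0) : ℕ × ℕ) ∈ Finset.HasAntidiagonal.antidiagonal k := by
      simp [Finset.HasAntidiagonal.mem_antidiagonal]
    rw [← Finset.sum_erase_add _ _ hmem] at heq
    set c2 := PowerSeries.coeff 0 (H ^ 2) with hc2def
    set A := ∑ p ∈ (Finset.HasAntidiagonal.antidiagonal k).erase (k, 0),
        PowerSeries.coeff p.1 F *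
          PowerSeries.coeff p.2 (H ^ 2) with hA
    set B := ∑ j ∈ Finset.Icc 1 d,
        PowerSeries.coeff k (a j * F ^ j) with hB
    have hmain : PowerSeries.coeff k F
        = (PowerSeries.coeff k χ - A - B) * c2⁻¹ := by
      have hunit : c2 * c2⁻¹ = 1 := MvPowerSeries.mul_inv_cancel _ hc2ne
      have h2 : PowerSeries.coeff k F * c2
          = PowerSeries.coeff k χ - A - B := by
        linear_combination heq
      rw [← h2, mul_assoc, hunit, mul_one]
    rw [hmain]
    refine PSConv.mul (PSConv.sub (PSConv.sub (hχconv k) ?_) ?_) hc2inv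
    · rw [hA]
      apply PSConv.sum
      intro p hp
      have h1 := Finset.mem_of_mem_erase hp
      rw [Finset.HasAntidiagonal.mem_antidiagonal] at h1
      have h2 := Finset.ne_of_mem_erase hp
      have hpk : p.1 < k := by
        rcases Nat.lt_or_ge p.1 k with h | h
        · exact h
        · exfalso
          apply h2
          have e1 : p.1 = k := le_antisymm (by omega) h
          have e2 : p.2 = 0 := by omega
          exact Prod.ext e1 e2
      exact (ih p.1 hpk).mul (hH2 p.2)
    · rw [hB]
      apply PSConv.sum
      intro j hj
      rw [PowerSeries.coeff_mul]
      apply PSConv.sum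
      intro p hp
      rw [Finset.HasAntidiagonal.mem_antidiagonal] at hp
      by_cases hp1 : p.1 = 0
      · rw [hp1, ha0 j hj, zero_mul]
        exact PSConv.zero
      · have hp2 : p.2 < k := by omega
        exact (haconv j hj p.1).mul
          (psconv_coeff_pow (fun i hi => ih i (by omega)))
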